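/- Let p be a prime and A = cyc(M, G) a cyclotomic S-ring over an abelian p-group G where M ≤ Aut(G) is a p-group. If some basic set X of A has size p, then A has a basic set Y which is a coset of a subgroup of order p contained in the thin radical of A. -/

import Mathlib

open scoped Pointwise

private lemma fix_aux {p : ℕ} [Fact p.Prime] {G : Type*} [CommGroup G] [Finite G]
    (hG : IsPGroup p G) (s : MulAut G) (k : ℕ) (hs : s ^ p ^ k = 1)
    (B : Subgroup G) (hB : ∀ g ∈ B, s g ∈ B) (hBnt : B ≠ ⊥) :
    ∃ b ∈ B, b ≠ 1 ∧ s b = b := by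
  classical
  let e : ↥B → ↥B := fun b => ⟨s b, hB b b.2⟩
  have einj : Function.Injective e := by
    intro a b hab
    exact Subtype.ext (s.injective (congrArg Subtype.val hab))
  let sB : Equiv.Perm ↥B := Equiv.ofBijective e ⟨einj, Finite.surjective_of_injective einj⟩
  have sB_apply : ∀ b : ↥B, ((sB b : ↥B) : G) = s b := fun b => rfl
  have sB_pow : ∀ (n : ℕ) (b : ↥B), (((sB ^ n) b : ↥B) : G) = (s ^ n) b := by
    intro n
    induction n with
    | zero => intro b; rfl
    | succ n ih =>
      intro b
      rw [pow_succ', pow_succ']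
      have : (sB * sB ^ n) b = sB ((sB ^ n) b) := rfl
      rw [this, sB_apply]
      rw [ih b]
      rfl
  have hspk : sB ^ p ^ k = 1 := by
    ext b
    rw [sB_pow, hs]
    rfl
  set H : Subgroup (Equiv.Perm ↥B) := Subgroup.zpowers sB with hH
  have hHp : IsPGroup p ↥H := by
    intro g
    refine ⟨k, ?_⟩
    obtain ⟨i, hi⟩ := g.2
    refine Subtype.ext ?_
    push_cast
    rw [← hi, ← zpow_natCast, ← zpow_mul, mul_comm, zpow_mul, zpow_natCast, hspk, one_zpow]
  have hzfix : ∀ (j : ℤ) (b : ↥B), sB b = b → (sB ^ j) b = b := by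
    intro j b hb
    induction j using Int.induction_on with
    | zero => rfl
    | succ i ih => rw [add_comm, zpow_add, zpow_one]; simp only [Equiv.Perm.mul_apply, hb, ih]
    | pred i ih =>
      rw [sub_eq_add_neg, add_comm, zpow_add]
      simp only [Equiv.Perm.mul_apply]
      rw [ih]
      have : sB ((sB ^ (-1 : ℤ)) b) = sB b := by
        rw [zpow_neg, zpow_one, ← Equiv.Perm.mul_apply, mul_inv_cancel, Equiv.Perm.one_apply, hb]
      exact sB.injective (by rw [this, hb])
  have hone : (1 : ↥B) ∈ MulAction.fixedPoints ↥H ↥B := by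
    intro g
    obtain ⟨i, hi⟩ := g.2
    have h1 : sB (1 : ↥B) = 1 := Subtype.ext (by rw [sB_apply]; simp)
    show (g : Equiv.Perm ↥B) (1 : ↥B) = 1
    rw [← hi]
    exact hzfix i 1 h1
  have hBp : IsPGroup p ↥B := hG.to_subgroup B
  obtain ⟨n, hn⟩ := hBp.exists_card_eq
  have hn0 : n ≠ 0 := by
    intro h
    rw [h, pow_zero, Subgroup.card_eq_one] at hn
    exact hBnt hn
  have hdvd : p ∣ Nat.card ↥B := hn ▸ dvd_pow_self p hn0
  obtain ⟨b, hbfix, hbne⟩ :=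
    hHp.exists_fixed_point_of_prime_dvd_card_of_fixed_point (α := ↥B) hdvd hone
  have hsBb : sB b = b := hbfix ⟨sB, Subgroup.mem_zpowers sB⟩
  refine ⟨(b : G), b.2, ?_, ?_⟩
  · intro h
    exact hbne (Subtype.ext h.symm)
  · have := congrArg Subtype.val hsBb
    rw [sB_apply] at this
    exact this

private lemma nilp_aux {p : ℕ} [Fact p.Prime] {G : Type*} [CommGroup G] [Finite G]
    (hG : IsPGroup p G) (s : MulAut G) (k : ℕ) (hs : s ^ p ^ k = 1) (g : G) :
    ∃ n, (fun a => s a * a⁻¹)^[n] g = 1 := by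
  classical
  let F : G →* G :=
    { toFun := fun a => s a * a⁻¹
      map_one' := by simp
      map_mul' := by
        intro a b
        simp only [map_mul, mul_inv]
        exact mul_mul_mul_comm _ _ _ _ }
  have hFcoe : (⇑F : G → G) = fun a => s a * a⁻¹ := rfl
  have key : ∀ (N : ℕ) (B : Subgroup G), Nat.card ↥B ≤ N → (∀ a ∈ B, s a ∈ B) →
      ∀ a ∈ B, ∃ n, (⇑F)^[n] a = 1 := by
    intro N
    induction N with
    | zero =>
      intro B hle _ a _
      have := Nat.card_pos (α := ↥B)
      omega
    | succ N ih =>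
      intro B hle hBinv a ha
      by_cases hbot : B = ⊥
      · refine ⟨0, ?_⟩
        rw [hbot, Subgroup.mem_bot] at ha
        simpa using ha
      · obtain ⟨b, hbB, hbne, hbfix⟩ := fix_aux hG s k hs B hBinv hbot
        set φ : ↥B →* G := F.comp B.subtype with hφ
        have hkerne : φ.ker ≠ ⊥ := by
          intro hk
          have hmem : (⟨b, hbB⟩ : ↥B) ∈ φ.ker := by
            simp only [MonoidHom.mem_ker, hφ, MonoidHom.comp_apply, Subgroup.coe_subtype]
            show s b * b⁻¹ = 1
            rw [hbfix, mul_inv_cancel]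
          rw [hk, Subgroup.mem_bot] at hmem
          exact hbne (congrArg Subtype.val hmem)
        have h2 : 2 ≤ Nat.card φ.ker := by
          have := (Subgroup.one_lt_card_iff_ne_bot φ.ker).mpr hkerne
          omega
        have hmul : Nat.card φ.range * Nat.card φ.ker = Nat.card ↥B := by
          rw [Subgroup.card_eq_card_quotient_mul_card_subgroup φ.ker,
            Nat.card_congr (QuotientGroup.quotientKerEquivRange φ).toEquiv]
        have hrpos : 0 < Nat.card φ.range := Nat.card_pos
        have hlt : Nat.card φ.range < Nat.card ↥B := by
          calc Nat.card φ.range = Nat.card φ.range * 1 := (mul_one _).symm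
            _ < Nat.card φ.range * Nat.card φ.ker := by
                exact (Nat.mul_lt_mul_left hrpos).mpr (by omega)
            _ = Nat.card ↥B := hmul
        have hrinv : ∀ c ∈ φ.range, s c ∈ φ.range := by
          rintro c ⟨d, rfl⟩
          refine ⟨⟨s d, hBinv d d.2⟩, ?_⟩
          show s (s d) * (s d)⁻¹ = s (s d * (d : G)⁻¹)
          rw [map_mul, map_inv]
        obtain ⟨n, hn⟩ := ih φ.range (by omega) hrinv (F a) ⟨⟨a, ha⟩, rfl⟩
        exact ⟨n + 1, by rwa [Function.iterate_succ_apply]⟩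
  obtain ⟨n, hn⟩ := key (Nat.card ↥(⊤ : Subgroup G)) ⊤ le_rfl (fun a _ => trivial) g trivial
  exact ⟨n, by rwa [hFcoe] at hn⟩

/-- Let `A = cyc(M,G)` be a cyclotomic S-ring over an abelian
`p`-group `G`, where `M ≤ Aut(G)` is a `p`-group (the basic sets of `A` are
the orbits of `M`). If some basic set (orbit) has size `p`, then some basic
set of `A` is a coset of a subgroup of order `p` contained in the thin
radical of `A` (the set of fixed points of `M`). -/
theorem sizep {p : ℕ} (hp : p.Prime) {G : Type*} [CommGroup G] [Fintype G]
    (hG : IsPGroup p G) (M : Subgroup (MulAut G)) (hM : IsPGroup p M)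
    (x : G) (hX : (MulAction.orbit M x).ncard = p) :
    ∃ (H : Subgroup G) (y : G),
      Nat.card H = p ∧ (∀ v ∈ H, ∀ m ∈ M, m v = v) ∧
      MulAction.orbit M y = (H : Set G) * {y} := by
  classical
  haveI : Fact p.Prime := ⟨hp⟩
  have hsmul : ∀ (m : ↥M) (g : G), m • g = (m : MulAut G) g := fun m g => rfl
  have hp1 : 1 < p := hp.one_lt
  have hxorb : x ∈ MulAction.orbit M x := MulAction.mem_orbit_self x
  have hx1 : x ≠ 1 := by
    rintro rfl
    have horb : MulAction.orbit M (1 : G) = {1} :=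
      Set.eq_singleton_iff_unique_mem.mpr
        ⟨MulAction.mem_orbit_self 1, fun g ⟨m, hm⟩ => by
          rw [← hm]; show m • (1 : G) = 1; rw [hsmul, map_one]⟩
    rw [horb, Set.ncard_singleton] at hX
    omega
  obtain ⟨σ, hσ⟩ : ∃ σ : ↥M, σ • x ≠ x := by
    by_contra hcon
    push_neg at hcon
    have horb : MulAction.orbit M x = {x} :=
      Set.eq_singleton_iff_unique_mem.mpr ⟨hxorb, fun g ⟨m, hm⟩ => by
        rw [← hm]; show m • x = x; exact hcon m⟩
    rw [horb, Set.ncard_singleton] at hX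
    omega
  set K := MulAction.stabilizer M x with hK
  have hKi : K.index = p := by rw [hK, MulAction.index_stabilizer, hX]
  haveI hKn : K.Normal := by
    haveI := hM.isNilpotent
    have hnc := normalizerCondition_of_isNilpotent (G := ↥M)
    have hKne : K ≠ ⊤ := by
      intro h
      rw [h, Subgroup.index_top] at hKi
      omega
    have hlt := hnc K (lt_top_iff_ne_top.mpr hKne)
    have hdvd : (Subgroup.normalizer (K : Set ↥M)).index ∣ p := hKi ▸ Subgroup.index_dvd_of_le hlt.le
    rcases hp.eq_one_or_self_of_dvd _ hdvd with h1 | hpp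
    · exact Subgroup.normalizer_eq_top_iff.mp (Subgroup.index_eq_one.mp h1)
    · exfalso
      have hmulr := Subgroup.relIndex_mul_index hlt.le
      rw [hpp, hKi] at hmulr
      have h1 : K.relIndex (Subgroup.normalizer (K : Set ↥M)) = 1 :=
        Nat.eq_of_mul_eq_mul_right (Nat.zero_lt_of_lt hp1) (by rw [one_mul]; exact hmulr)
      exact hlt.ne (le_antisymm hlt.le (Subgroup.relIndex_eq_one.mp h1))
  have hσpK : σ ^ p ∈ K := by
    have hcard : Nat.card (↥M ⧸ K) = p := by rw [← Subgroup.index_eq_card, hKi]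
    have : ((σ : ↥M ⧸ K)) ^ p = 1 := by
      rw [← hcard]
      exact pow_card_eq_one'
    rwa [← QuotientGroup.mk_pow, QuotientGroup.eq_one_iff] at this
  have hKorb : ∀ κ ∈ K, ∀ m : ↥M, κ • (m • x) = m • x := by
    intro κ hκ m
    have hconj : m⁻¹ * κ * m ∈ K := by
      have := hKn.conj_mem κ hκ m⁻¹
      simpa [mul_assoc] using this
    calc κ • (m • x) = (κ * m) • x := (mul_smul _ _ _).symm
      _ = (m * (m⁻¹ * κ * m)) • x := by rw [show κ * m = m * (m⁻¹ * κ * m) by group]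
      _ = m • ((m⁻¹ * κ * m) • x) := mul_smul _ _ _
      _ = m • x := by rw [hconj]
  set Bx := Subgroup.closure (MulAction.orbit M x) with hBx
  have hBxinv : ∀ (m : ↥M), ∀ g ∈ Bx, (m : MulAut G) g ∈ Bx := by
    intro m g hg
    induction hg using Subgroup.closure_induction with
    | mem g hg =>
      obtain ⟨m', rfl⟩ := hg
      apply Subgroup.subset_closure
      exact ⟨m * m', by
        show (m * m') • x = (m : MulAut G) (m' • x)
        rw [mul_smul, hsmul, hsmul]⟩
    | one => simpa using Bx.one_mem
    | mul a b _ _ ha hb => rw [map_mul]; exact Bx.mul_mem ha hb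
    | inv a _ ha => rw [map_inv]; exact Bx.inv_mem ha
  have hKfixBx : ∀ κ ∈ K, ∀ g ∈ Bx, (κ : MulAut G) g = g := by
    intro κ hκ g hg
    induction hg using Subgroup.closure_induction with
    | mem g hg =>
      obtain ⟨m', rfl⟩ := hg
      show (κ : MulAut G) (m' • x) = m' • x
      have := hKorb κ hκ m'
      rwa [hsmul (κ) (m' • x)] at this
    | one => exact map_one _
    | mul a b _ _ ha hb => rw [map_mul, ha, hb]
    | inv a _ ha => rw [map_inv, ha]
  set s : MulAut G := (σ : MulAut G) with hsdef
  obtain ⟨k, hk⟩ := hM σ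
  have hspk : s ^ p ^ k = 1 := by
    rw [hsdef, ← SubgroupClass.coe_pow, hk, Subgroup.coe_one]
  obtain ⟨n, hn⟩ := nilp_aux hG s k hspk x
  set F : G → G := fun a => s a * a⁻¹ with hF
  have hex : ∃ n, F^[n] x = 1 := ⟨n, hn⟩
  set n₀ := Nat.find hex with hn₀def
  have hn₀ : F^[n₀] x = 1 := Nat.find_spec hex
  have hmin : ∀ j < n₀, F^[j] x ≠ 1 := fun j hj => Nat.find_min hex hj
  have hsx : s x ≠ x := by
    intro h
    exact hσ (by rw [hsmul]; exact h)
  have hn0ne : n₀ ≠ 0 := by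
    intro h
    rw [h] at hn₀
    exact hx1 hn₀
  have hn1ne : n₀ ≠ 1 := by
    intro h
    rw [h] at hn₀
    have : s x = x := by
      have := hn₀
      simp only [Function.iterate_one, hF] at this
      exact mul_inv_eq_one.mp this
    exact hsx this
  obtain ⟨m0, hm0⟩ : ∃ m0, n₀ = m0 + 2 := ⟨n₀ - 2, by omega⟩
  set y := F^[m0] x with hy
  set h := F^[m0 + 1] x with hh
  have hFy : F y = h := by rw [hh, Function.iterate_succ_apply']
  have hFh : F h = 1 := by
    have h2 : F^[m0 + 2] x = F (F^[m0 + 1] x) := Function.iterate_succ_apply' F (m0 + 1) x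
    rw [hh, ← h2, ← hm0]
    exact hn₀
  have hh1 : h ≠ 1 := hmin (m0 + 1) (by omega)
  have hsh : s h = h := mul_inv_eq_one.mp hFh
  have hsy : s y = h * y := by
    have := hFy
    rw [hF] at this
    exact mul_inv_eq_iff_eq_mul.mp this
  have hxBx : x ∈ Bx := Subgroup.subset_closure hxorb
  have hFmem : ∀ g ∈ Bx, F g ∈ Bx := fun g hg =>
    Bx.mul_mem (hBxinv σ g hg) (Bx.inv_mem hg)
  have hiter : ∀ j, F^[j] x ∈ Bx := by
    intro j
    induction j with
    | zero => exact hxBx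
    | succ j ih => rw [Function.iterate_succ_apply']; exact hFmem _ ih
  have hyBx : y ∈ Bx := hiter m0
  have hhBx : h ∈ Bx := hiter (m0 + 1)
  have hσi : ∀ i : ℤ, ((σ ^ i : ↥M) : MulAut G) = s ^ i := fun i => by
    rw [hsdef, SubgroupClass.coe_zpow]
  have hσpy : (s ^ (p : ℤ)) y = y := by
    have := hKfixBx (σ ^ p) hσpK y hyBx
    rw [SubgroupClass.coe_pow] at this
    rw [zpow_natCast, hsdef]
    exact this
  have hsinvh : s⁻¹ h = h := by
    conv_lhs => rw [← hsh]
    exact s.symm_apply_apply h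
  have hsinvy : s⁻¹ y = h⁻¹ * y := by
    have h1 : s⁻¹ (s y) = y := s.symm_apply_apply y
    rw [hsy, map_mul, hsinvh] at h1
    exact eq_inv_mul_iff_mul_eq.mpr h1
  have hshz : ∀ i : ℤ, (s ^ i) h = h := by
    intro i
    induction i using Int.induction_on with
    | zero => rfl
    | succ i ih => rw [add_comm, zpow_add, zpow_one, MulAut.mul_apply, ih, hsh]
    | pred i ih =>
      rw [sub_eq_add_neg, add_comm, zpow_add, MulAut.mul_apply, ih, zpow_neg, zpow_one]
      exact hsinvh
  have hzy : ∀ i : ℤ, (s ^ i) y = h ^ i * y := by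
    intro i
    induction i using Int.induction_on with
    | zero => simp
    | succ i ih =>
      rw [add_comm, zpow_add, zpow_one, MulAut.mul_apply, ih, map_mul, map_zpow, hsh, hsy]
      rw [zpow_add, zpow_one]
      group
    | pred i ih =>
      rw [sub_eq_add_neg, add_comm, zpow_add, MulAut.mul_apply, ih, zpow_neg, zpow_one,
        map_mul, map_zpow, hsinvh, hsinvy]
      group
  have hppow : h ^ (p : ℤ) = 1 := by
    have := hσpy
    rw [hzy] at this
    exact mul_right_cancel (by rw [this, one_mul])
  have hppow' : h ^ p = 1 := by
    rw [← zpow_natCast]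
    exact hppow
  have hord : orderOf h = p := by
    have hdvd := orderOf_dvd_of_pow_eq_one hppow'
    rcases hp.eq_one_or_self_of_dvd _ hdvd with h1 | hpp
    · exact absurd (orderOf_eq_one_iff.mp h1) hh1
    · exact hpp
  -- stabilizer of h is everything
  have hKle : K ≤ MulAction.stabilizer M h := by
    intro κ hκ
    show κ • h = h
    rw [hsmul]
    exact hKfixBx κ hκ h hhBx
  have hσst : σ ∈ MulAction.stabilizer M h := by
    show σ • h = h
    rw [hsmul]
    exact hsh
  set J := K ⊔ Subgroup.zpowers σ with hJ
  have hJtop : J = ⊤ := by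
    have hdvd : J.index ∣ p := hKi ▸ Subgroup.index_dvd_of_le le_sup_left
    rcases hp.eq_one_or_self_of_dvd _ hdvd with h1 | hpp
    · exact Subgroup.index_eq_one.mp h1
    · exfalso
      have hmulr := Subgroup.relIndex_mul_index (le_sup_left : K ≤ J)
      rw [hpp, hKi] at hmulr
      have h1 : K.relIndex J = 1 :=
        Nat.eq_of_mul_eq_mul_right (Nat.zero_lt_of_lt hp1) (by rw [one_mul]; exact hmulr)
      have hJK : J ≤ K := Subgroup.relIndex_eq_one.mp h1
      have : σ ∈ K := hJK (Subgroup.mem_sup_right (Subgroup.mem_zpowers σ))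
      exact hσ this
  have hstab : ∀ m : ↥M, m • h = h := by
    intro m
    have hle : J ≤ MulAction.stabilizer M h :=
      sup_le hKle (Subgroup.zpowers_le.mpr hσst)
    exact hle (hJtop ▸ Subgroup.mem_top m)
  refine ⟨Subgroup.zpowers h, y, ?_, ?_, ?_⟩
  · rw [Nat.card_zpowers, hord]
  · rintro v hv mm hmm
    obtain ⟨i, rfl⟩ := hv
    have hfix := hstab ⟨mm, hmm⟩
    rw [hsmul] at hfix
    show mm (h ^ i) = h ^ i
    rw [map_zpow]
    exact congrArg (· ^ i) hfix
  · ext z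
    constructor
    · rintro ⟨m, rfl⟩
      have hmJ : (m : ↥M) ∈ (↑K * ↑(Subgroup.zpowers σ) : Set ↥M) := by
        rw [← Subgroup.normal_mul]
        rw [← hJ, hJtop]
        exact Subgroup.mem_top m
      obtain ⟨κ, hκ, w, hw, rfl⟩ := hmJ
      obtain ⟨i, rfl⟩ := hw
      show (κ * σ ^ i) • y ∈ (↑(Subgroup.zpowers h) : Set G) * {y}
      rw [mul_smul, hsmul, hsmul, hσi, hzy]
      rw [hKfixBx κ hκ _ (Bx.mul_mem (Bx.zpow_mem hhBx i) hyBx)]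
      exact Set.mul_mem_mul ⟨i, rfl⟩ rfl
    · rintro ⟨v, hv, y', hy', rfl⟩
      obtain ⟨i, rfl⟩ := hv
      rw [Set.mem_singleton_iff] at hy'
      subst hy'
      refine ⟨σ ^ i, ?_⟩
      show (σ ^ i : ↥M) • y = h ^ i * y
      rw [hsmul, hσi, hzy]
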